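/- The unit ball of the K-norm scaled by τ (i.e., {x : sum of K largest absolute entries of x ≤ τ}) equals the convex hull of the union of the L1-ball B_1(τ) and the hypercube B_∞(τ/K). -/

import Mathlib

/-- The K-norm of x ∈ R^n: the sum of the K largest absolute entries of x. -/
noncomputable def kNorm (n K : ℕ) (x : Fin n → ℝ) : ℝ :=
  sSup {s : ℝ | ∃ S : Finset (Fin n), S.card = K ∧ s = ∑ i ∈ S, |x i|}

lemma kNorm_set_finite (n K : ℕ) (x : Fin n → ℝ) :
    {s : ℝ | ∃ S : Finset (Fin n), S.card = K ∧ s = ∑ i ∈ S, |x i|}.Finite := by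
  have hsub : {s : ℝ | ∃ S : Finset (Fin n), S.card = K ∧ s = ∑ i ∈ S, |x i|} ⊆
      (fun S : Finset (Fin n) => ∑ i ∈ S, |x i|) '' Set.univ := by
    rintro s ⟨S, _, rfl⟩
    exact ⟨S, trivial, rfl⟩
  exact Set.Finite.subset (Set.finite_univ.image _) hsub

lemma kNorm_set_nonempty (n K : ℕ) (hKn : K ≤ n) (x : Fin n → ℝ) :
    {s : ℝ | ∃ S : Finset (Fin n), S.card = K ∧ s = ∑ i ∈ S, |x i|}.Nonempty := by
  obtain ⟨S, -, hS⟩ := Finset.exists_subset_card_eq (s := (Finset.univ : Finset (Fin n))) (n := K)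
    (by simpa using hKn)
  exact ⟨∑ i ∈ S, |x i|, S, hS, rfl⟩

lemma kNorm_le_iff (n K : ℕ) (hKn : K ≤ n) (x : Fin n → ℝ) (τ : ℝ) :
    kNorm n K x ≤ τ ↔ ∀ S : Finset (Fin n), S.card = K → ∑ i ∈ S, |x i| ≤ τ := by
  constructor
  · intro h S hS
    refine le_trans ?_ h
    exact le_csSup (kNorm_set_finite n K x).bddAbove ⟨S, hS, rfl⟩
  · intro h
    apply csSup_le (kNorm_set_nonempty n K hKn x)
    rintro s ⟨S, hS, rfl⟩
    exact h S hS

/-- The K-norm ball of radius τ, {x : kNorm x ≤ τ}, equals the convex hull of the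
union of the L1-ball B_1(τ) and the hypercube B_∞(τ/K). -/
theorem kNorm_ball_eq_convexHull {n K : ℕ} (hK1 : 1 ≤ K) (hKn : K ≤ n)
    (τ : ℝ) (hτ : 0 < τ) :
    {x : Fin n → ℝ | kNorm n K x ≤ τ} =
      convexHull ℝ ({x : Fin n → ℝ | (∑ i, |x i|) ≤ τ} ∪
        {x : Fin n → ℝ | ∀ i, |x i| ≤ τ / K}) := by
  have hK0 : (0:ℝ) < K := by exact_mod_cast hK1
  set ρ : ℝ := τ / K with hρdef
  have hρ0 : 0 < ρ := div_pos hτ hK0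
  have hKρ : (K:ℝ) * ρ = τ := by
    rw [hρdef]; field_simp
  apply Set.Subset.antisymm
  · -- hard direction
    intro x hx
    have hsum : ∀ S : Finset (Fin n), S.card = K → ∑ i ∈ S, |x i| ≤ τ :=
      (kNorm_le_iff n K hKn x τ).1 hx
    by_cases hB : ∀ i, |x i| ≤ ρ
    · exact subset_convexHull ℝ _ (Set.mem_union_right _ hB)
    -- choose a maximizing S₀
    obtain ⟨Sw, -, hSw⟩ := Finset.exists_subset_card_eq (s := (Finset.univ : Finset (Fin n))) (n := K)
      (by simpa using hKn)
    obtain ⟨S₀, hS₀P, hmax⟩ := (Finset.powersetCard K (Finset.univ : Finset (Fin n))).exists_max_image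
      (fun S => ∑ i ∈ S, |x i|) ⟨Sw, Finset.mem_powersetCard_univ.mpr hSw⟩
    have hS₀card : S₀.card = K := Finset.mem_powersetCard_univ.mp hS₀P
    have hS₀ne : S₀.Nonempty := Finset.card_pos.mp (by omega)
    obtain ⟨i₀, hi₀, hmin⟩ := S₀.exists_min_image (fun i => |x i|) hS₀ne
    set t : ℝ := |x i₀| with htdef
    have ht0 : 0 ≤ t := abs_nonneg _
    have hsum₀ : ∑ i ∈ S₀, |x i| ≤ τ := hsum S₀ hS₀card
    have hout : ∀ i ∉ S₀, |x i| ≤ t := by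
      intro i hi
      by_contra h
      push_neg at h
      have hni : i ∉ S₀.erase i₀ := fun hc => hi (Finset.mem_of_mem_erase hc)
      have hmem : insert i (S₀.erase i₀) ∈ Finset.powersetCard K (Finset.univ : Finset (Fin n)) := by
        rw [Finset.mem_powersetCard_univ, Finset.card_insert_of_notMem hni,
          Finset.card_erase_of_mem hi₀, hS₀card]
        omega
      have hle := hmax _ hmem
      rw [Finset.sum_insert hni, Finset.sum_erase_eq_sub hi₀] at hle
      linarith
    have htK : (K:ℝ) * t ≤ ∑ i ∈ S₀, |x i| := by
      have : ∑ _i ∈ S₀, t ≤ ∑ i ∈ S₀, |x i| := Finset.sum_le_sum (fun i hi => hmin i hi)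
      rwa [Finset.sum_const, hS₀card, nsmul_eq_mul] at this
    have htρ : t ≤ ρ := by nlinarith
    push_neg at hB
    obtain ⟨j, hj⟩ := hB
    have hjS₀ : j ∈ S₀ := by
      by_contra hc
      exact absurd (le_trans (hout j hc) htρ) (not_le.mpr hj)
    have htltρ : t < ρ := by
      rcases lt_or_eq_of_le htρ with h | h
      · exact h
      · exfalso
        have h1 : ∑ i ∈ S₀.erase j, |x i| ≥ ∑ _i ∈ S₀.erase j, t :=
          Finset.sum_le_sum (fun i hi => hmin i (Finset.mem_of_mem_erase hi))
        rw [Finset.sum_const, Finset.card_erase_of_mem hjS₀, hS₀card, nsmul_eq_mul,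
          Nat.cast_sub hK1, Nat.cast_one] at h1
        have h2 : ∑ i ∈ S₀, |x i| = |x j| + ∑ i ∈ S₀.erase j, |x i| :=
          (Finset.add_sum_erase _ _ hjS₀).symm
        rw [h] at h1
        nlinarith [h1, h2, hj, hKρ, hsum₀]
    by_cases ht : t = 0
    · -- x is in the L1 ball
      have heq : ∑ i ∈ S₀, |x i| = ∑ i, |x i| := by
        apply Finset.sum_subset (Finset.subset_univ S₀)
        intro i _ hi
        have := hout i hi
        rw [ht] at this
        have := abs_nonneg (x i)
        linarith
      exact subset_convexHull ℝ _ (Set.mem_union_left _ (by simpa [← heq] using hsum₀))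
    -- main case : 0 < t < ρ
    have ht0' : 0 < t := lt_of_le_of_ne ht0 (Ne.symm ht)
    set lam : ℝ := (ρ - t) / ρ with hlamdef
    have hlam0 : 0 < lam := div_pos (by linarith) hρ0
    have hlam1 : lam < 1 := by
      rw [hlamdef, div_lt_one hρ0]; linarith
    have h1lam : 1 - lam = t / ρ := by
      rw [hlamdef]; field_simp; ring
    set u : Fin n → ℝ := fun i => if |x i| ≤ t then 0 else ((|x i| - t) / (lam * |x i|)) * x i
      with hudef
    set v : Fin n → ℝ := fun i => if |x i| ≤ t then (ρ / t) * x i else (ρ / |x i|) * x i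
      with hvdef
    have habs_u : ∀ i, |u i| = if |x i| ≤ t then 0 else (|x i| - t) / lam := by
      intro i
      by_cases h : |x i| ≤ t
      · simp [hudef, h]
      · push_neg at h
        have hxi0 : 0 < |x i| := lt_trans ht0' h
        simp only [hudef, if_neg (not_le.mpr h)]
        have hnn : 0 ≤ (|x i| - t) / (lam * |x i|) :=
          div_nonneg (by linarith) (by positivity)
        rw [abs_mul, abs_of_nonneg hnn]
        field_simp
    have hv_mem : ∀ i, |v i| ≤ ρ := by
      intro i
      by_cases h : |x i| ≤ t
      · simp only [hvdef, if_pos h, abs_mul, abs_of_nonneg (le_of_lt (div_pos hρ0 ht0'))]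
        rw [div_mul_eq_mul_div, mul_comm]
        rw [div_le_iff₀ ht0']
        calc |x i| * ρ ≤ t * ρ := by nlinarith [abs_nonneg (x i)]
          _ = ρ * t := by ring
      · push_neg at h
        have hxi0 : 0 < |x i| := lt_trans ht0' h
        simp only [hvdef, if_neg (not_le.mpr h), abs_mul,
          abs_of_nonneg (le_of_lt (div_pos hρ0 hxi0))]
        rw [div_mul_cancel₀]
        exact ne_of_gt hxi0
    have hu_mem : ∑ i, |u i| ≤ τ := by
      have hz : ∀ i ∈ Finset.univ, i ∉ S₀ → |u i| = 0 := by
        intro i _ hi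
        rw [habs_u, if_pos (hout i hi)]
      rw [← Finset.sum_subset (Finset.subset_univ S₀) hz]
      have hle : ∀ i ∈ S₀, |u i| ≤ (|x i| - t) / lam := by
        intro i hi
        rw [habs_u]
        by_cases h : |x i| ≤ t
        · rw [if_pos h]
          have : t ≤ |x i| := hmin i hi
          have : |x i| = t := le_antisymm h this
          simp [this]
        · rw [if_neg h]
      calc ∑ i ∈ S₀, |u i| ≤ ∑ i ∈ S₀, (|x i| - t) / lam := Finset.sum_le_sum hle
        _ = (∑ i ∈ S₀, (|x i| - t)) / lam := by rw [Finset.sum_div]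
        _ = (∑ i ∈ S₀, |x i| - K * t) / lam := by
            rw [Finset.sum_sub_distrib, Finset.sum_const, hS₀card, nsmul_eq_mul]
        _ ≤ (τ - K * t) / lam := by gcongr
        _ = τ := by
            rw [div_eq_iff (ne_of_gt hlam0), hlamdef, ← hKρ]
            field_simp
    have hx_eq : x = lam • u + (1 - lam) • v := by
      funext i
      simp only [Pi.add_apply, Pi.smul_apply, smul_eq_mul, hudef, hvdef]
      by_cases h : |x i| ≤ t
      · rw [if_pos h, if_pos h, h1lam]
        field_simp
        ring
      · push_neg at h
        have hxi0 : (0:ℝ) < |x i| := lt_trans ht0' h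
        rw [if_neg (not_le.mpr h), if_neg (not_le.mpr h), h1lam]
        field_simp
        ring
    rw [hx_eq]
    refine (convex_convexHull ℝ _) ?_ ?_ hlam0.le (by linarith) (by ring)
    · exact subset_convexHull ℝ _ (Set.mem_union_left _ hu_mem)
    · exact subset_convexHull ℝ _ (Set.mem_union_right _ hv_mem)
  · -- easy direction
    apply convexHull_min
    · rintro x (hx | hx)
      · rw [Set.mem_setOf_eq, kNorm_le_iff n K hKn x τ]
        intro S _
        calc ∑ i ∈ S, |x i| ≤ ∑ i, |x i| :=
              Finset.sum_le_sum_of_subset_of_nonneg (Finset.subset_univ S)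
                (fun i _ _ => abs_nonneg _)
          _ ≤ τ := hx
      · rw [Set.mem_setOf_eq, kNorm_le_iff n K hKn x τ]
        intro S hS
        calc ∑ i ∈ S, |x i| ≤ ∑ _i ∈ S, ρ := Finset.sum_le_sum (fun i _ => hx i)
          _ = K * ρ := by rw [Finset.sum_const, hS, nsmul_eq_mul]
          _ = τ := hKρ
    · intro x hx y hy a b ha hb hab
      rw [Set.mem_setOf_eq, kNorm_le_iff n K hKn _ τ]
      intro S hS
      have hx' := (kNorm_le_iff n K hKn x τ).1 hx S hS
      have hy' := (kNorm_le_iff n K hKn y τ).1 hy S hS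
      calc ∑ i ∈ S, |a * x i + b * y i| ≤ ∑ i ∈ S, (a * |x i| + b * |y i|) := by
            apply Finset.sum_le_sum
            intro i _
            calc |a * x i + b * y i| ≤ |a * x i| + |b * y i| := abs_add_le _ _
              _ = a * |x i| + b * |y i| := by
                  rw [abs_mul, abs_mul, abs_of_nonneg ha, abs_of_nonneg hb]
        _ = a * ∑ i ∈ S, |x i| + b * ∑ i ∈ S, |y i| := by
            rw [Finset.sum_add_distrib, Finset.mul_sum, Finset.mul_sum]
        _ ≤ a * τ + b * τ := by
            apply add_le_add
            · exact mul_le_mul_of_nonneg_left hx' ha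
            · exact mul_le_mul_of_nonneg_left hy' hb
        _ = τ := by rw [← add_mul, hab, one_mul]
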